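/- (Properties of the Curie–Weiss rate function) Define f(θ, s) = log cosh(2√θ s) − s² for θ > 0 and s ∈ ℝ, and let F(θ) = sup_{s ∈ ℝ} f(θ, s). Then: (i) F(θ) = 0 for all 0 < θ ≤ 1/2; and (ii) F is strictly increasing on (1/2, ∞); in particular, for every θ > 1/2 and every c with 0 < c ≤ θ − 1/2, F(θ) > F(θ − c) whenever θ − c > 1/2, and F(θ) > 0 = F(θ − c) whenever θ − c ≤ 1/2. -/
import Mathlib

open Real

/-- The Curie–Weiss rate function `f(θ, s) = log cosh(2√θ s) - s²`. -/
noncomputable def fCW (θ s : ℝ) : ℝ := Real.log (Real.cosh (2 * Real.sqrt θ * s)) - s ^ 2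

/-- `F(θ) = sup_{s ∈ ℝ} f(θ, s)`. -/
noncomputable def FCW (θ : ℝ) : ℝ := ⨆ s : ℝ, fCW θ s

lemma log_cosh_le_half_sq (x : ℝ) : Real.log (Real.cosh x) ≤ x ^ 2 / 2 := by
  calc Real.log (Real.cosh x) ≤ Real.log (Real.exp (x ^ 2 / 2)) :=
        Real.log_le_log (Real.cosh_pos x) (Real.cosh_le_exp_half_sq x)
    _ = x ^ 2 / 2 := Real.log_exp _

lemma log_cosh_le_abs (x : ℝ) : Real.log (Real.cosh x) ≤ |x| := by
  have h : Real.cosh x ≤ Real.exp |x| := by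
    rw [← Real.cosh_abs, Real.cosh_eq]
    have h1 : Real.exp (-|x|) ≤ Real.exp |x| := Real.exp_le_exp.2 (neg_le_self (abs_nonneg x))
    linarith
  calc Real.log (Real.cosh x) ≤ Real.log (Real.exp |x|) :=
        Real.log_le_log (Real.cosh_pos x) h
    _ = |x| := Real.log_exp _

lemma one_add_half_sq_le_cosh (x : ℝ) : 1 + x ^ 2 / 2 ≤ Real.cosh x := by
  have h : Real.cosh x = 1 + 2 * Real.sinh (x / 2) ^ 2 := by
    have h1 := Real.cosh_two_mul (x / 2)
    have h2 := Real.cosh_sq (x / 2)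
    rw [show 2 * (x / 2) = x by ring] at h1
    rw [h1, h2]; ring
  have hs : (x / 2) ^ 2 ≤ Real.sinh (x / 2) ^ 2 := by
    rcases le_or_gt 0 (x / 2) with h0 | h0
    · have := Real.self_le_sinh_iff.2 h0
      nlinarith [Real.sinh_nonneg_iff.2 h0]
    · have := Real.sinh_lt_self_iff.2 h0
      nlinarith [(Real.sinh_neg_iff.2 h0).le]
  nlinarith

lemma log_one_add_ge (u : ℝ) (hu : 0 ≤ u) : u - u ^ 2 ≤ Real.log (1 + u) := by
  have h1 : 0 < 1 + u := by linarith
  have h2 := Real.log_le_sub_one_of_pos (show (0:ℝ) < (1 + u)⁻¹ by positivity)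
  rw [Real.log_inv] at h2
  have h4 : (1 + u) * (1 + u)⁻¹ = 1 := mul_inv_cancel₀ (ne_of_gt h1)
  have h5 : (1 + u)⁻¹ ≤ 1 - u + u ^ 2 := by nlinarith [inv_pos.2 h1]
  linarith

/-- `f(θ, s) ≤ θ` for `θ ≥ 0`. -/
lemma fCW_le (θ : ℝ) (hθ : 0 ≤ θ) (s : ℝ) : fCW θ s ≤ θ := by
  have h1 := log_cosh_le_abs (2 * Real.sqrt θ * s)
  have h2 : |2 * Real.sqrt θ * s| = 2 * Real.sqrt θ * |s| := by
    rw [abs_mul, abs_of_nonneg (by positivity : (0:ℝ) ≤ 2 * Real.sqrt θ)]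
  have h3 : (|s| - Real.sqrt θ) ^ 2 ≥ 0 := sq_nonneg _
  have h4 : Real.sqrt θ ^ 2 = θ := Real.sq_sqrt hθ
  have h5 : |s| ^ 2 = s ^ 2 := sq_abs s
  unfold fCW
  nlinarith

lemma bddAbove_fCW (θ : ℝ) (hθ : 0 ≤ θ) : BddAbove (Set.range (fCW θ)) := by
  refine ⟨θ, ?_⟩
  rintro x ⟨s, rfl⟩
  exact fCW_le θ hθ s

lemma fCW_zero (θ : ℝ) : fCW θ 0 = 0 := by
  simp [fCW]

/-- Part (i): `F(θ) = 0` for `0 < θ ≤ 1/2`. -/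
lemma FCW_eq_zero {θ : ℝ} (hθ : 0 < θ) (hθ2 : θ ≤ 1 / 2) : FCW θ = 0 := by
  have hb := bddAbove_fCW θ hθ.le
  refine le_antisymm (ciSup_le fun s => ?_) ?_
  · have h1 := log_cosh_le_half_sq (2 * Real.sqrt θ * s)
    have h4 : Real.sqrt θ ^ 2 = θ := Real.sq_sqrt hθ.le
    unfold fCW
    nlinarith [sq_nonneg s]
  · have := le_ciSup hb 0
    rwa [fCW_zero] at this

/-- `F(θ) > 0` for `θ > 1/2`. -/
lemma FCW_pos {θ : ℝ} (hθ : 1 / 2 < θ) : 0 < FCW θ := by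
  have hθ0 : 0 < θ := by linarith
  have hnum : (0:ℝ) < 2 * θ - 1 := by linarith
  set s : ℝ := Real.sqrt ((2 * θ - 1) / (8 * θ ^ 2)) with hs
  have hs2 : s ^ 2 = (2 * θ - 1) / (8 * θ ^ 2) :=
    Real.sq_sqrt (le_of_lt (div_pos hnum (by positivity)))
  have hspos : 0 < s ^ 2 := by rw [hs2]; exact div_pos hnum (by positivity)
  have h4 : Real.sqrt θ ^ 2 = θ := Real.sq_sqrt hθ0.le
  have hx2 : (2 * Real.sqrt θ * s) ^ 2 / 2 = 2 * θ * s ^ 2 := by nlinarith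
  have hu0 : (0:ℝ) ≤ 2 * θ * s ^ 2 := by positivity
  have hcosh : 1 + 2 * θ * s ^ 2 ≤ Real.cosh (2 * Real.sqrt θ * s) := by
    have := one_add_half_sq_le_cosh (2 * Real.sqrt θ * s)
    linarith
  have hlog : Real.log (1 + 2 * θ * s ^ 2) ≤ Real.log (Real.cosh (2 * Real.sqrt θ * s)) :=
    Real.log_le_log (by linarith) hcosh
  have hlow := log_one_add_ge (2 * θ * s ^ 2) hu0
  have hkey : 0 < fCW θ s := by
    unfold fCW
    have h8 : (8 * θ ^ 2) * s ^ 2 = 2 * θ - 1 := by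
      rw [hs2]; field_simp
    nlinarith
  calc (0:ℝ) < fCW θ s := hkey
    _ ≤ FCW θ := le_ciSup (bddAbove_fCW θ hθ0.le) s

/-- Reparametrized form. -/
noncomputable def hCW (θ u : ℝ) : ℝ := Real.log (Real.cosh u) - u ^ 2 / (4 * θ)

lemma range_hCW (θ : ℝ) (hθ : 0 < θ) : Set.range (fCW θ) = Set.range (hCW θ) := by
  have hsq : Real.sqrt θ ^ 2 = θ := Real.sq_sqrt hθ.le
  have hsp : 0 < Real.sqrt θ := Real.sqrt_pos.2 hθ
  ext x
  constructor
  · rintro ⟨s, rfl⟩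
    refine ⟨2 * Real.sqrt θ * s, ?_⟩
    unfold fCW hCW
    have : (2 * Real.sqrt θ * s) ^ 2 / (4 * θ) = s ^ 2 := by
      field_simp; nlinarith
    rw [this]
  · rintro ⟨u, rfl⟩
    refine ⟨u / (2 * Real.sqrt θ), ?_⟩
    unfold fCW hCW
    have h1 : 2 * Real.sqrt θ * (u / (2 * Real.sqrt θ)) = u := by
      field_simp
    have h2 : (u / (2 * Real.sqrt θ)) ^ 2 = u ^ 2 / (4 * θ) := by
      rw [div_pow]; congr 1; nlinarith
    rw [h1, h2]

lemma FCW_eq_hSup (θ : ℝ) (hθ : 0 < θ) : FCW θ = ⨆ u : ℝ, hCW θ u := by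
  unfold FCW
  simp only [iSup]
  rw [show (Set.range fun s => fCW θ s) = Set.range (fCW θ) from rfl, range_hCW θ hθ]

lemma bddAbove_hCW (θ : ℝ) (hθ : 0 < θ) : BddAbove (Set.range (hCW θ)) := by
  rw [← range_hCW θ hθ]; exact bddAbove_fCW θ hθ.le

/-- Part (ii): strict monotonicity. -/
lemma FCW_strictMonoOn : StrictMonoOn FCW (Set.Ioi (1 / 2 : ℝ)) := by
  intro θ1 h1 θ2 h2 hlt
  simp only [Set.mem_Ioi] at h1 h2
  have hθ1 : (0:ℝ) < θ1 := by linarith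
  have hθ2 : (0:ℝ) < θ2 := by linarith
  obtain ⟨A, hA⟩ : ∃ A, FCW θ1 = A := ⟨_, rfl⟩
  have hApos : 0 < A := hA ▸ FCW_pos h1
  obtain ⟨c, hc⟩ : ∃ c, (1 / (4 * θ1) - 1 / (4 * θ2) : ℝ) = c := ⟨_, rfl⟩
  have hcpos : 0 < c := by
    rw [← hc]
    have : 1 / (4 * θ2) < 1 / (4 * θ1) := by
      apply one_div_lt_one_div_of_lt <;> linarith
    linarith
  obtain ⟨ε, hε⟩ : ∃ ε, min (A / 2) (A * c / 2) = ε := ⟨_, rfl⟩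
  have hεpos : 0 < ε := hε ▸ lt_min (by linarith) (by positivity)
  have hε1 : ε ≤ A / 2 := hε ▸ min_le_left _ _
  have hε2 : ε ≤ A * c / 2 := hε ▸ min_le_right _ _
  have hlt' : A - ε < ⨆ u : ℝ, hCW θ1 u := by
    rw [← FCW_eq_hSup θ1 hθ1, hA]; linarith
  obtain ⟨u, hu⟩ := exists_lt_of_lt_ciSup hlt'
  -- lower bound on u²
  have hcosh_pos : A - ε < Real.log (Real.cosh u) := by
    have : u ^ 2 / (4 * θ1) ≥ 0 := by positivity
    unfold hCW at hu; linarith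
  have hu2 : A < u ^ 2 := by
    have := log_cosh_le_half_sq u
    linarith
  have hstep : hCW θ2 u = hCW θ1 u + u ^ 2 * c := by
    unfold hCW
    rw [← hc]
    field_simp
    ring
  have hle : hCW θ2 u ≤ FCW θ2 := by
    rw [FCW_eq_hSup θ2 hθ2]
    exact le_ciSup (bddAbove_hCW θ2 hθ2) u
  have h5 : A * c < u ^ 2 * c := by nlinarith
  have h6 : hCW θ1 u + u ^ 2 * c ≤ FCW θ2 := le_of_eq_of_le hstep.symm hle
  have h7 : A + A * c / 2 ≤ FCW θ2 := by linarith
  rw [hA]; linarith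

theorem curieWeiss_rate_function_props :
    (∀ θ : ℝ, 0 < θ → θ ≤ 1 / 2 → FCW θ = 0) ∧
    StrictMonoOn FCW (Set.Ioi (1 / 2 : ℝ)) ∧
    (∀ θ : ℝ, 1 / 2 < θ → ∀ c : ℝ, 0 < c → c ≤ θ - 1 / 2 →
      (1 / 2 < θ - c → FCW (θ - c) < FCW θ) ∧
      (θ - c ≤ 1 / 2 → FCW (θ - c) = 0 ∧ 0 < FCW θ)) := by
  refine ⟨fun θ hθ hθ2 => FCW_eq_zero hθ hθ2, FCW_strictMonoOn, ?_⟩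
  intro θ hθ c hc hc2
  constructor
  · intro h
    exact FCW_strictMonoOn (Set.mem_Ioi.2 h) (Set.mem_Ioi.2 hθ) (by linarith)
  · intro h
    exact ⟨FCW_eq_zero (by linarith) h, FCW_pos hθ⟩
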